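/- Suppose p > 0, p ≤ x ≤ 2p, and a·(2p - x) < u ≤ a·x. Then P(A·|C·p - x| ≤ u) = 1/2 + (1/(4a))·( u/p + (u/p)·ln(a·x/u) + a·(2 - x/p) ). -/

import Mathlib

open MeasureTheory ProbabilityTheory
open scoped ENNReal

/-- The uniform distribution on the interval `[s, t]`: Lebesgue measure restricted to
`[s, t]`, scaled by `(t - s)⁻¹`. -/
noncomputable def uniformMeasure (s t : ℝ) : Measure ℝ :=
  (ENNReal.ofReal (t - s))⁻¹ • volume.restrict (Set.Icc s t)

instance uniformMeasure_sFinite (s t : ℝ) : SFinite (uniformMeasure s t) := by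
  unfold uniformMeasure; infer_instance

/-- Auxiliary: the conditional probability (slice density) as a function of the value of `A`. -/
noncomputable def gwoG (p x u : ℝ) : ℝ → ℝ :=
  fun s => if s ≤ u / x then (1:ℝ) else 2⁻¹ * (2 - (x / p - u / (s * p)))

lemma gwoG_val_neg (p x u s : ℝ) (hc : ¬ s ≤ u / x) :
    gwoG p x u s = 2⁻¹ * (2 - (x / p - u / (s * p))) := by
  simp [gwoG, hc]

lemma gwoG_measurable (p x u : ℝ) : Measurable (gwoG p x u) := by
  apply Measurable.ite (measurableSet_Iic (a := u / x)) measurable_const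
  fun_prop

lemma gwoG_nonneg (p x u : ℝ) (hp : 0 < p) (hx2 : x ≤ 2 * p) (hx0 : 0 < x) (hu0 : 0 < u) :
    ∀ s : ℝ, 0 ≤ gwoG p x u s := by
  intro s
  by_cases hc : s ≤ u / x
  · simp [gwoG, hc]
  · rw [gwoG_val_neg p x u s hc]
    push_neg at hc
    have hux : 0 < u / x := div_pos hu0 hx0
    have hs0 : 0 < s := hux.trans hc
    have h2 : x / p ≤ 2 := by rw [div_le_iff₀ hp]; linarith
    have h3 : 0 ≤ u / (s * p) := div_nonneg hu0.le (by positivity)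
    linarith

lemma gwoG_bd (p x u : ℝ) (hp : 0 < p) (hx2 : x ≤ 2 * p) (hx0 : 0 < x) (hu0 : 0 < u) :
    ∀ s : ℝ, ‖gwoG p x u s‖ ≤ 1 := by
  intro s
  rw [Real.norm_eq_abs, abs_of_nonneg (gwoG_nonneg p x u hp hx2 hx0 hu0 s)]
  by_cases hc : s ≤ u / x
  · simp [gwoG, hc]
  · rw [gwoG_val_neg p x u s hc]
    push_neg at hc
    have hux : 0 < u / x := div_pos hu0 hx0
    have hs0 : 0 < s := hux.trans hc
    have husx : u < s * x := (div_lt_iff₀ hx0).1 hc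
    have h1 : u / (s * p) ≤ x / p := by
      rw [div_le_div_iff₀ (by positivity) hp]; nlinarith
    linarith

/-- The measure of each slice of the event under the uniform law of `C`. -/
lemma gwo_slice (a p x u : ℝ) (hp : 0 < p) (hx1 : p ≤ x) (hx2 : x ≤ 2 * p)
    (hu1 : a * (2 * p - x) < u) (hu2 : u ≤ a * x)
    (hx0 : 0 < x) (hu0 : 0 < u) :
    ∀ s ∈ Set.Icc (-a) a,
      (uniformMeasure 0 2) {c : ℝ | s * |c * p - x| ≤ u} = ENNReal.ofReal (gwoG p x u s) := by
  have hux : 0 < u / x := div_pos hu0 hx0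
  intro s hs
  have hTm : MeasurableSet {c : ℝ | s * |c * p - x| ≤ u} := by
    have hcont : Continuous fun c : ℝ => s * |c * p - x| := by continuity
    exact measurableSet_le hcont.measurable measurable_const
  rw [uniformMeasure, Measure.smul_apply, Measure.restrict_apply hTm, smul_eq_mul]
  by_cases hcase : s ≤ u / x
  · rw [gwoG]; simp only [if_pos hcase]
    have hsub : Set.Icc (0:ℝ) 2 ⊆ {c : ℝ | s * |c * p - x| ≤ u} := by
      intro c hc
      obtain ⟨hc0, hc2⟩ := hc
      have habs : |c * p - x| ≤ x := by
        rw [abs_le]; constructor <;> nlinarith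
      simp only [Set.mem_setOf_eq]
      rcases le_or_gt s 0 with hs0 | hs0
      · have : s * |c * p - x| ≤ 0 := mul_nonpos_of_nonpos_of_nonneg hs0 (abs_nonneg _)
        linarith
      · have h1 : s * |c * p - x| ≤ s * x := mul_le_mul_of_nonneg_left habs hs0.le
        have h2 : s * x ≤ u := (le_div_iff₀ hx0).1 hcase
        linarith
    rw [Set.inter_eq_self_of_subset_right hsub]
    simp only [Real.volume_Icc]
    rw [ENNReal.ofReal_one, show (2:ℝ) - 0 = 2 by ring,
      ENNReal.inv_mul_cancel (by simp) (by simp)]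
  · rw [gwoG_val_neg p x u s hcase]
    push_neg at hcase
    have hs0 : 0 < s := hux.trans hcase
    have hsa : s ≤ a := hs.2
    have husx : u < s * x := (div_lt_iff₀ hx0).1 hcase
    obtain ⟨L, hL⟩ : ∃ L : ℝ, L = x / p - u / (s * p) := ⟨_, rfl⟩
    rw [← hL]
    have hkey2 : (x / p) * p = x := div_mul_cancel₀ x hp.ne'
    have hkey3 : (u / (s * p)) * p = u / s := by field_simp
    have hkeyL : L * p = x - u / s := by rw [hL, sub_mul, hkey2, hkey3]
    have husx2 : u / s < x := (div_lt_iff₀ hs0).2 (by linarith)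
    have hinter : {c : ℝ | s * |c * p - x| ≤ u} ∩ Set.Icc (0:ℝ) 2 = Set.Icc L 2 := by
      ext c
      simp only [Set.mem_inter_iff, Set.mem_setOf_eq, Set.mem_Icc]
      constructor
      · rintro ⟨hcu, hc0, hc2⟩
        refine ⟨?_, hc2⟩
        have habs : |c * p - x| ≤ u / s := by
          rw [← mul_le_mul_iff_right₀ hs0, mul_div_cancel₀ u hs0.ne']
          linarith [hcu]
        rw [abs_le] at habs
        have h1 : L * p ≤ c * p := by linarith [habs.1, hkeyL]
        exact le_of_mul_le_mul_right h1 hp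
      · rintro ⟨hcL, hc2⟩
        have hL0 : 0 ≤ L := (mul_nonneg_iff_of_pos_right hp).1 (by linarith [hkeyL])
        have hc0 : 0 ≤ c := le_trans hL0 hcL
        refine ⟨?_, hc0, hc2⟩
        have habs : |c * p - x| ≤ u / s := by
          rw [abs_le]
          constructor
          · have h1 := mul_le_mul_of_nonneg_right hcL hp.le
            linarith [hkeyL, h1]
          · have h2pxu : 2 * p - x ≤ u / s := (le_div_iff₀ hs0).2 (by nlinarith)
            nlinarith
        calc s * |c * p - x| ≤ s * (u / s) := mul_le_mul_of_nonneg_left habs hs0.le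
          _ = u := by field_simp
    rw [hinter]
    simp only [Real.volume_Icc]
    rw [show (2:ℝ) - 0 = 2 by ring, ← ENNReal.ofReal_inv_of_pos (by norm_num : (0:ℝ) < 2),
      ← ENNReal.ofReal_mul (by norm_num)]

/-- The integral of the slice density. -/
lemma gwo_integral (a p x u : ℝ) (ha : 0 < a) (hp : 0 < p) (hx0 : 0 < x) (hu0 : 0 < u)
    (hx2 : x ≤ 2 * p) (huxa : u / x ≤ a) :
    ∫ s in Set.Icc (-a) a, gwoG p x u s
      = (u / x + a) + ((1 - x / (2*p)) * (a - u / x) + u / (2*p) * Real.log (a * x / u)) := by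
  have hux : 0 < u / x := div_pos hu0 hx0
  have hIoc : ∀ c d : ℝ, IntegrableOn (gwoG p x u) (Set.Ioc c d) volume := by
    intro c d
    exact Integrable.mono' (integrable_const 1)
      (gwoG_measurable p x u).aestronglyMeasurable
      (Filter.Eventually.of_forall (gwoG_bd p x u hp hx2 hx0 hu0))
  have hint : ∀ c d : ℝ, IntervalIntegrable (gwoG p x u) volume c d :=
    fun c d => ⟨hIoc c d, hIoc d c⟩
  rw [integral_Icc_eq_integral_Ioc, ← intervalIntegral.integral_of_le (by linarith : -a ≤ a),
    ← intervalIntegral.integral_add_adjacent_intervals (hint (-a) (u/x)) (hint (u/x) a)]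
  have h1 : ∫ s in (-a)..(u/x), gwoG p x u s = u / x + a := by
    rw [intervalIntegral.integral_congr (g := fun _ => (1:ℝ))
      (fun s hs => by
        rw [Set.uIcc_of_le (by linarith : -a ≤ u / x)] at hs
        exact if_pos hs.2)]
    simp
  have h2 : ∫ s in (u/x)..a, gwoG p x u s
      = (1 - x / (2*p)) * (a - u / x) + u / (2*p) * Real.log (a * x / u) := by
    have heq : Set.EqOn (gwoG p x u) (fun s => (1 - x / (2*p)) + (u / (2*p)) * (1/s))
        (Set.uIcc (u/x) a) := by
      intro s hs
      rw [Set.uIcc_of_le huxa] at hs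
      have hs0 : 0 < s := lt_of_lt_of_le hux hs.1
      rcases eq_or_lt_of_le hs.1 with hcase | hcase
      · subst hcase
        have hval : gwoG p x u (u/x) = 1 := by simp [gwoG]
        rw [hval]
        field_simp
        ring
      · rw [gwoG_val_neg p x u s (not_le.2 hcase)]
        field_simp
        ring
    rw [intervalIntegral.integral_congr heq]
    have hi1 : IntervalIntegrable (fun _ : ℝ => (1 - x / (2*p))) volume (u/x) a :=
      intervalIntegrable_const
    have hi2 : IntervalIntegrable (fun s : ℝ => (u / (2*p)) * (1/s)) volume (u/x) a := by
      apply ContinuousOn.intervalIntegrable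
      apply ContinuousOn.mul continuousOn_const
      apply ContinuousOn.div continuousOn_const continuousOn_id
      intro s hs
      rw [Set.uIcc_of_le huxa] at hs
      exact ne_of_gt (lt_of_lt_of_le hux hs.1)
    rw [intervalIntegral.integral_add hi1 hi2, intervalIntegral.integral_const,
      intervalIntegral.integral_const_mul, integral_one_div (by
        rw [Set.uIcc_of_le huxa]
        intro h
        exact absurd h.1 (not_le.2 hux))]
    rw [div_div_eq_mul_div]
    simp [smul_eq_mul]
    ring
  rw [h1, h2]

/-- CDF case from the proof of Theorem 1. -/
theorem gwo_cdf_case3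
    {Ω : Type*} [MeasurableSpace Ω] (P : Measure Ω) [IsProbabilityMeasure P]
    (a p x : ℝ) (ha : 0 < a) (A C : Ω → ℝ) (hA : Measurable A) (hC : Measurable C)
    (hInd : IndepFun A C P)
    (hAlaw : Measure.map A P = uniformMeasure (-a) a)
    (hClaw : Measure.map C P = uniformMeasure 0 2)
    (u : ℝ) (hp : 0 < p) (hx1 : p ≤ x) (hx2 : x ≤ 2 * p) (hu1 : a * (2 * p - x) < u) (hu2 : u ≤ a * x) :
    (P {ω | A ω * |C ω * p - x| ≤ u}).toReal
      = 1 / 2 + (1 / (4 * a)) * (u / p + (u / p) * Real.log (a * x / u) + a * (2 - x / p)) := by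
  have hx0 : 0 < x := lt_of_lt_of_le hp hx1
  have h2px : 0 ≤ 2 * p - x := by linarith
  have hu0 : 0 < u := lt_of_le_of_lt (by positivity) hu1
  have hux : 0 < u / x := div_pos hu0 hx0
  have huxa : u / x ≤ a := (div_le_iff₀ hx0).2 (by linarith)
  set S : Set (ℝ × ℝ) := {q | q.1 * |q.2 * p - x| ≤ u} with hSdef
  have hSm : MeasurableSet S := by
    have hcont : Continuous fun q : ℝ × ℝ => q.1 * |q.2 * p - x| := by continuity
    exact measurableSet_le hcont.measurable measurable_const
  have hmap : P {ω | A ω * |C ω * p - x| ≤ u}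
      = ((uniformMeasure (-a) a).prod (uniformMeasure 0 2)) S := by
    have hprod : Measure.map (fun ω => (A ω, C ω)) P
        = (uniformMeasure (-a) a).prod (uniformMeasure 0 2) := by
      rw [← hAlaw, ← hClaw]
      exact (indepFun_iff_map_prod_eq_prod_map_map hA.aemeasurable hC.aemeasurable).1 hInd
    rw [← hprod, Measure.map_apply (hA.prodMk hC) hSm]
    rfl
  have hgint : Integrable (gwoG p x u) (volume.restrict (Set.Icc (-a) a)) :=
    Integrable.mono' (integrable_const 1) (gwoG_measurable p x u).aestronglyMeasurable
      (Filter.Eventually.of_forall (gwoG_bd p x u hp hx2 hx0 hu0))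
  rw [hmap, Measure.prod_apply hSm]
  have huni : uniformMeasure (-a) a
      = (ENNReal.ofReal (2*a))⁻¹ • volume.restrict (Set.Icc (-a) a) := by
    rw [uniformMeasure, show a - -a = 2*a by ring]
  rw [huni, lintegral_smul_measure]
  have hre : ∫⁻ s in Set.Icc (-a) a, (uniformMeasure 0 2) (Prod.mk s ⁻¹' S)
      = ∫⁻ s in Set.Icc (-a) a, ENNReal.ofReal (gwoG p x u s) := by
    apply setLIntegral_congr_fun measurableSet_Icc
    exact (fun s hs => gwo_slice a p x u hp hx1 hx2 hu1 hu2 hx0 hu0 s hs)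
  rw [hre, ← ofReal_integral_eq_lintegral_ofReal hgint
    (Filter.Eventually.of_forall (gwoG_nonneg p x u hp hx2 hx0 hu0)),
    gwo_integral a p x u ha hp hx0 hu0 hx2 huxa]
  have hlog : 0 ≤ Real.log (a * x / u) :=
    Real.log_nonneg ((le_div_iff₀ hu0).2 (by linarith))
  have hcoef : 0 ≤ 1 - x / (2*p) := by
    rw [sub_nonneg, div_le_one (by positivity)]; linarith
  have hE : 0 ≤ (u / x + a) + ((1 - x / (2*p)) * (a - u / x) + u / (2*p) * Real.log (a * x / u)) := by
    have h4 : 0 ≤ (1 - x / (2*p)) * (a - u / x) := mul_nonneg hcoef (by linarith)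
    have h5 : 0 ≤ u / (2*p) * Real.log (a * x / u) := mul_nonneg (by positivity) hlog
    linarith
  rw [smul_eq_mul, ENNReal.toReal_mul, ENNReal.toReal_inv, ENNReal.toReal_ofReal (by positivity),
    ENNReal.toReal_ofReal hE]
  field_simp
  ring
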